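/- There exists a constant κ_d > 0, depending only on the dimension d ≥ 1, such that for every n ≥ 1 and every subset A ⊆ (ℤ/nℤ)^d ordered greedily as x_1, …, x_k (so that d(x_j, x_{j+1}) = min_{i>j} d(x_j, x_i) for each j), the product of the consecutive distances satisfies ∏_{j=1}^{k−1} d(x_j, x_{j+1}) ≤ κ_d^{n^d}. -/

import Mathlib

open scoped BigOperators

/-- One step of movement on the torus `(ℤ/nℤ)^d`. -/
def torusMove (d n : ℕ) (x : Fin d → ZMod n) (m : Fin d × Bool) : Fin d → ZMod n :=
  Function.update x m.1 (x m.1 + if m.2 then 1 else -1)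

/-- Position after performing the list of moves `l` starting from `x`. -/
def posAfter (d n : ℕ) (x : Fin d → ZMod n) (l : List (Fin d × Bool)) : Fin d → ZMod n :=
  l.foldl (torusMove d n) x

/-- Graph distance on the torus `(ℤ/nℤ)^d`. -/
noncomputable def tdist (d n : ℕ) (x y : Fin d → ZMod n) : ℕ :=
  sInf {L : ℕ | ∃ l : List (Fin d × Bool), l.length = L ∧ posAfter d n x l = y}

section helpers
variable (d n : ℕ)

lemma posAfter_append (x : Fin d → ZMod n) (l1 l2 : List (Fin d × Bool)) :
    posAfter d n x (l1 ++ l2) = posAfter d n (posAfter d n x l1) l2 :=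
  List.foldl_append

lemma posAfter_replicate (x : Fin d → ZMod n) (i : Fin d) (m : ℕ) :
    posAfter d n x (List.replicate m (i, true)) = Function.update x i (x i + m) := by
  induction m generalizing x with
  | zero => simp [posAfter]
  | succ m ih =>
    rw [List.replicate_succ]
    show posAfter d n (torusMove d n x (i, true)) _ = _
    rw [ih]
    funext j
    rcases eq_or_ne j i with rfl | h
    · simp [torusMove, Function.update_self]
      push_cast
      ring
    · simp [torusMove, Function.update_of_ne h]

lemma posAfter_multi (f : Fin d → ℕ) (s : Finset (Fin d)) :
    ∀ x : Fin d → ZMod n, ∃ l : List (Fin d × Bool), l.length = ∑ i ∈ s, f i ∧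
      posAfter d n x l = fun i => if i ∈ s then x i + (f i : ZMod n) else x i := by
  classical
  induction s using Finset.induction with
  | empty => intro x; exact ⟨[], by simp, by funext i; simp [posAfter]⟩
  | @insert a s ha ih =>
    intro x
    obtain ⟨l, hl, hp⟩ := ih x
    refine ⟨l ++ List.replicate (f a) (a, true), ?_, ?_⟩
    · simp [hl, Finset.sum_insert ha]; omega
    · rw [posAfter_append, hp, posAfter_replicate]
      funext i
      rcases eq_or_ne i a with rfl | h
      · simp [Function.update_self, ha]
      · simp [Function.update_of_ne h, h]

variable [NeZero n]

lemma reach (x y : Fin d → ZMod n) :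
    ∃ l : List (Fin d × Bool), l.length ≤ d * n ∧ posAfter d n x l = y := by
  obtain ⟨l, hl, hp⟩ := posAfter_multi d n (fun i => (y i - x i).val) Finset.univ x
  refine ⟨l, ?_, ?_⟩
  · rw [hl]
    calc ∑ i : Fin d, (y i - x i).val ≤ ∑ _i : Fin d, n :=
          Finset.sum_le_sum (fun i _ => (ZMod.val_lt _).le)
      _ = d * n := by simp [Finset.sum_const, Finset.card_univ]
  · rw [hp]; funext i; simp [ZMod.natCast_val, ZMod.cast_id]

lemma tdist_le (x y : Fin d → ZMod n) (l : List (Fin d × Bool)) (h : posAfter d n x l = y) :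
    tdist d n x y ≤ l.length :=
  Nat.sInf_le ⟨l, rfl, h⟩

lemma tdist_spec (x y : Fin d → ZMod n) :
    ∃ l : List (Fin d × Bool), l.length = tdist d n x y ∧ posAfter d n x l = y := by
  obtain ⟨l, _, hp⟩ := reach d n x y
  have hne : {L : ℕ | ∃ l : List (Fin d × Bool), l.length = L ∧ posAfter d n x l = y}.Nonempty :=
    ⟨l.length, l, rfl, hp⟩
  exact Nat.sInf_mem hne

lemma tdist_le_dn (x y : Fin d → ZMod n) : tdist d n x y ≤ d * n := by
  obtain ⟨l, hl, hp⟩ := reach d n x y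
  exact (tdist_le d n x y l hp).trans hl

lemma tdist_triangle (x y z : Fin d → ZMod n) :
    tdist d n x z ≤ tdist d n x y + tdist d n y z := by
  obtain ⟨l1, h1, p1⟩ := tdist_spec d n x y
  obtain ⟨l2, h2, p2⟩ := tdist_spec d n y z
  have := tdist_le d n x z (l1 ++ l2) (by rw [posAfter_append, p1, p2])
  simpa [h1, h2] using this

lemma torusMove_cancel (x : Fin d → ZMod n) (m : Fin d × Bool) :
    torusMove d n (torusMove d n x m) (m.1, !m.2) = x := by
  rcases m with ⟨i, b⟩
  funext j
  rcases eq_or_ne j i with rfl | h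
  · cases b <;> simp [torusMove, Function.update_self] <;> ring
  · simp [torusMove, Function.update_of_ne h]

lemma posAfter_inv (x : Fin d → ZMod n) (l : List (Fin d × Bool)) :
    posAfter d n (posAfter d n x l) (l.reverse.map (fun m => (m.1, !m.2))) = x := by
  induction l generalizing x with
  | nil => rfl
  | cons m t ih =>
    show posAfter d n (posAfter d n (torusMove d n x m) t) _ = x
    rw [List.reverse_cons, List.map_append, posAfter_append, ih]
    show torusMove d n (torusMove d n x m) (m.1, !m.2) = x
    exact torusMove_cancel d n x m

lemma tdist_comm (x y : Fin d → ZMod n) : tdist d n x y = tdist d n y x := by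
  have key : ∀ a b : Fin d → ZMod n, tdist d n b a ≤ tdist d n a b := by
    intro a b
    obtain ⟨l, hl, hp⟩ := tdist_spec d n a b
    have := tdist_le d n b a (l.reverse.map (fun m => (m.1, !m.2)))
      (by rw [← hp]; exact posAfter_inv d n a l)
    simpa [hl] using this
  exact le_antisymm (key y x) (key x y)

lemma tdist_self (x : Fin d → ZMod n) : tdist d n x x = 0 :=
  Nat.le_zero.mp (tdist_le d n x x [] rfl)

lemma tdist_pos (x y : Fin d → ZMod n) (h : x ≠ y) : 1 ≤ tdist d n x y := by
  rcases Nat.eq_zero_or_pos (tdist d n x y) with h0 | h1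
  · obtain ⟨l, hl, hp⟩ := tdist_spec d n x y
    rw [h0, List.length_eq_zero_iff] at hl
    subst hl
    exact absurd hp h
  · exact h1

lemma exists_at_dist (x z : Fin d → ZMod n) (s : ℕ) (hs : s ≤ tdist d n x z) :
    ∃ y, tdist d n x y = s := by
  obtain ⟨l, hl, hp⟩ := tdist_spec d n x z
  refine ⟨posAfter d n x (l.take s), ?_⟩
  have h1 : tdist d n x (posAfter d n x (l.take s)) ≤ s := by
    have := tdist_le d n x _ (l.take s) rfl
    rw [List.length_take] at this
    exact this.trans (min_le_left _ _)
  have h2 : posAfter d n (posAfter d n x (l.take s)) (l.drop s) = z := by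
    rw [← posAfter_append, List.take_append_drop, hp]
  have h3 : tdist d n (posAfter d n x (l.take s)) z ≤ tdist d n x z - s := by
    have := tdist_le d n (posAfter d n x (l.take s)) z (l.drop s) h2
    rwa [List.length_drop, hl] at this
  have h4 := tdist_triangle d n x (posAfter d n x (l.take s)) z
  omega

end helpers

/-- There exists a constant `κ_d > 0`, depending only on the dimension `d ≥ 1`, such
that for every `n ≥ 1` and every subset of `(ℤ/nℤ)^d` ordered greedily as
`x_1, …, x_k`, the product of the consecutive distances `∏_j d(x_j, x_{j+1})`
is at most `κ_d^{n^d}`. -/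
theorem stmt3 (d : ℕ) (hd : 1 ≤ d) :
    ∃ κ : ℝ, 0 < κ ∧ ∀ n : ℕ, 1 ≤ n → ∀ (k : ℕ) (x : Fin k → Fin d → ZMod n),
      Function.Injective x →
      (∀ (j i : Fin k) (h : (j : ℕ) + 1 < k), j < i →
        tdist d n (x j) (x ⟨(j : ℕ) + 1, h⟩) ≤ tdist d n (x j) (x i)) →
      (∏ j : Fin k, if h : (j : ℕ) + 1 < k
          then (tdist d n (x j) (x ⟨(j : ℕ) + 1, h⟩) : ℝ) else 1)
        ≤ κ ^ (n ^ d) := by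
  classical
  refine ⟨16, by norm_num, ?_⟩
  intro n hn k x hinj hg
  haveI : NeZero n := ⟨by omega⟩
  set ℓ : Fin k → ℕ := fun j =>
    if h : (j : ℕ) + 1 < k then tdist d n (x j) (x ⟨(j : ℕ) + 1, h⟩) else 1 with hℓdef
  have hprod : (∏ j : Fin k, if h : (j : ℕ) + 1 < k
      then (tdist d n (x j) (x ⟨(j : ℕ) + 1, h⟩) : ℝ) else 1) = ∏ j : Fin k, (ℓ j : ℝ) := by
    refine Finset.prod_congr rfl fun j _ => ?_
    by_cases h : (j : ℕ) + 1 < k <;> simp [hℓdef, h]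
  rw [hprod]
  have hℓ1 : ∀ j, 1 ≤ ℓ j := by
    intro j
    by_cases h : (j : ℕ) + 1 < k
    · simp only [hℓdef, dif_pos h]
      apply tdist_pos
      intro he
      have := hinj he
      rw [Fin.ext_iff] at this
      simp at this
    · simp [hℓdef, h]
  have hℓle : ∀ j i : Fin k, j < i → ℓ j ≤ tdist d n (x j) (x i) := by
    intro j i hji
    have hik := i.isLt
    have hji' : (j : ℕ) < (i : ℕ) := hji
    have hk : (j : ℕ) + 1 < k := by omega
    simp only [hℓdef, dif_pos hk]
    exact hg j i hk hji
  have hℓdn : ∀ j, ℓ j ≤ d * n := by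
    intro j
    by_cases h : (j : ℕ) + 1 < k
    · simp only [hℓdef, dif_pos h]; exact tdist_le_dn d n _ _
    · simp only [hℓdef, dif_neg h]
      calc 1 = 1 * 1 := rfl
        _ ≤ d * n := Nat.mul_le_mul hd hn
  set Y : Fin k → ℕ → (Fin d → ZMod n) := fun j s =>
    if h : ∃ y, tdist d n (x j) y = s then h.choose else x j with hYdef
  have hYd : ∀ (j : Fin k), (j : ℕ) + 1 < k → ∀ s : ℕ, s ≤ ℓ j →
      tdist d n (x j) (Y j s) = s := by
    intro j hk s hs
    have hex : ∃ y, tdist d n (x j) y = s := by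
      apply exists_at_dist
      simpa only [hℓdef, dif_pos hk] using hs
    simp only [hYdef, dif_pos hex]
    exact hex.choose_spec
  set A : ℕ → Finset (Fin k) := fun m => Finset.univ.filter (fun j => 2 ^ m ≤ ℓ j) with hAdef
  have hkcard : k ≤ n ^ d := by
    have := Fintype.card_le_of_injective x hinj
    simpa [ZMod.card] using this
  have hAcard : ∀ m : ℕ, 1 ≤ m → (A m).card * 2 ^ (m - 1) ≤ n ^ d := by
    intro m hm
    have h2m : (2 : ℕ) ^ (m - 1) * 2 = 2 ^ m := by
      rw [← pow_succ]; congr 1; omega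
    have key : ∀ (j j' : Fin k) (s s' : ℕ), j ∈ A m → j' ∈ A m → s < 2 ^ (m - 1) →
        s' < 2 ^ (m - 1) → j < j' → Y j s ≠ Y j' s' := by
      intro j j' s s' hj hj' hs hs' hjj' heq
      have hℓj : 2 ^ m ≤ ℓ j := (Finset.mem_filter.mp hj).2
      have hℓj' : 2 ^ m ≤ ℓ j' := (Finset.mem_filter.mp hj').2
      have h2 : 2 ≤ 2 ^ m := by
        calc (2:ℕ) = 2 ^ 1 := rfl
          _ ≤ 2 ^ m := Nat.pow_le_pow_right (by norm_num) hm
      have hkj : (j : ℕ) + 1 < k := by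
        by_contra hc
        have : ℓ j = 1 := by simp [hℓdef, hc]
        omega
      have hkj' : (j' : ℕ) + 1 < k := by
        by_contra hc
        have : ℓ j' = 1 := by simp [hℓdef, hc]
        omega
      have hd1 : tdist d n (x j) (Y j s) = s := hYd j hkj s (by omega)
      have hd2 : tdist d n (x j') (Y j' s') = s' := hYd j' hkj' s' (by omega)
      have htri := tdist_triangle d n (x j) (Y j s) (x j')
      rw [tdist_comm d n (Y j s) (x j'), hd1, heq, hd2] at htri
      have hsep := hℓle j j' hjj'
      omega
    have hinjon : Set.InjOn (fun p : Fin k × ℕ => Y p.1 p.2)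
        ((A m ×ˢ Finset.range (2 ^ (m - 1))) : Finset (Fin k × ℕ)) := by
      rintro ⟨j, s⟩ hp ⟨j', s'⟩ hq heq
      simp only [Finset.coe_product, Set.mem_prod, Finset.mem_coe, Finset.mem_range] at hp hq
      simp only at heq
      rcases lt_trichotomy j j' with h | h | h
      · exact absurd heq (key j j' s s' hp.1 hq.1 hp.2 hq.2 h)
      · subst h
        have hkj : (j : ℕ) + 1 < k := by
          by_contra hc
          have h1 : ℓ j = 1 := by simp [hℓdef, hc]
          have hℓj : 2 ^ m ≤ ℓ j := (Finset.mem_filter.mp hp.1).2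
          have h2 : 2 ≤ 2 ^ m := by
            calc (2:ℕ) = 2 ^ 1 := rfl
              _ ≤ 2 ^ m := Nat.pow_le_pow_right (by norm_num) hm
          omega
        have h2m' : (2:ℕ) ^ (m-1) ≤ 2 ^ m := Nat.pow_le_pow_right (by norm_num) (by omega)
        have hℓj : 2 ^ m ≤ ℓ j := (Finset.mem_filter.mp hp.1).2
        have hd1 : tdist d n (x j) (Y j s) = s := hYd j hkj s (by omega)
        have hd2 : tdist d n (x j) (Y j s') = s' := hYd j hkj s' (by omega)
        rw [heq, hd2] at hd1
        rw [hd1]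
      · exact absurd heq.symm (key j' j s' s hq.1 hp.1 hq.2 hp.2 h)
    calc (A m).card * 2 ^ (m - 1)
        = ((A m ×ˢ Finset.range (2 ^ (m - 1))) : Finset (Fin k × ℕ)).card := by
          rw [Finset.card_product, Finset.card_range]
      _ ≤ (Finset.univ : Finset (Fin d → ZMod n)).card :=
          Finset.card_le_card_of_injOn _ (fun _ _ => Finset.mem_univ _) hinjon
      _ = n ^ d := by simp [ZMod.card]
  set M : ℕ := d * n with hM
  have hℓlt : ∀ j, ℓ j < 2 ^ M := fun j => lt_of_le_of_lt (hℓdn j) Nat.lt_two_pow_self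
  have hlog : ∀ j, Nat.log 2 (ℓ j) + 1 ≤ M := by
    intro j
    have := Nat.log_lt_of_lt_pow (Nat.one_le_iff_ne_zero.mp (hℓ1 j)) (hℓlt j)
    omega
  have hcard_eq : ∀ j, ((Finset.range M).filter (fun m => 2 ^ m ≤ ℓ j)).card
      = Nat.log 2 (ℓ j) + 1 := by
    intro j
    have : (Finset.range M).filter (fun m => 2 ^ m ≤ ℓ j)
        = Finset.range (Nat.log 2 (ℓ j) + 1) := by
      ext m
      simp only [Finset.mem_filter, Finset.mem_range]
      rw [← Nat.le_log_iff_pow_le (by norm_num) (Nat.one_le_iff_ne_zero.mp (hℓ1 j))]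
      have := hlog j
      omega
    rw [this, Finset.card_range]
  have hswap : ∑ j : Fin k, (Nat.log 2 (ℓ j) + 1) = ∑ m ∈ Finset.range M, (A m).card := by
    calc ∑ j : Fin k, (Nat.log 2 (ℓ j) + 1)
        = ∑ j : Fin k, ((Finset.range M).filter (fun m => 2 ^ m ≤ ℓ j)).card :=
          Finset.sum_congr rfl fun j _ => (hcard_eq j).symm
      _ = ∑ j : Fin k, ∑ m ∈ Finset.range M, if 2 ^ m ≤ ℓ j then 1 else 0 :=
          Finset.sum_congr rfl fun j _ => Finset.card_filter _ _
      _ = ∑ m ∈ Finset.range M, ∑ j : Fin k, if 2 ^ m ≤ ℓ j then 1 else 0 := Finset.sum_comm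
      _ = ∑ m ∈ Finset.range M, (A m).card :=
          Finset.sum_congr rfl fun m _ => (Finset.card_filter _ _).symm
  have hcard_real : ∀ m ∈ Finset.range M, ((A m).card : ℝ) ≤ 2 * (n:ℝ) ^ d * (1 / 2) ^ m := by
    intro m _
    rcases Nat.eq_zero_or_pos m with rfl | hm
    · simp only [pow_zero, mul_one]
      have h0 : (A 0).card ≤ n ^ d := le_trans (le_trans (Finset.card_filter_le _ _)
        (by simp)) hkcard
      have h0' : ((A 0).card : ℝ) ≤ (n:ℝ) ^ d := by exact_mod_cast h0
      nlinarith [pow_nonneg (by positivity : (0:ℝ) ≤ (n:ℝ)) d]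
    · have h1 := hAcard m hm
      have h2m : (2 : ℕ) ^ (m - 1) * 2 = 2 ^ m := by rw [← pow_succ]; congr 1; omega
      have h2 : (A m).card * 2 ^ m ≤ 2 * n ^ d := by
        calc (A m).card * 2 ^ m = (A m).card * 2 ^ (m - 1) * 2 := by rw [mul_assoc, h2m]
          _ ≤ n ^ d * 2 := by omega
          _ = 2 * n ^ d := by ring
      have h2' : ((A m).card : ℝ) * 2 ^ m ≤ 2 * (n:ℝ) ^ d := by exact_mod_cast h2
      have hpos : (0:ℝ) < 2 ^ m := by positivity
      rw [div_pow, one_pow, mul_one_div, le_div_iff₀ hpos]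
      linarith
  have hTle : ∑ j : Fin k, (Nat.log 2 (ℓ j) + 1) ≤ 4 * n ^ d := by
    have h1 : ((∑ j : Fin k, (Nat.log 2 (ℓ j) + 1) : ℕ) : ℝ) ≤ 4 * (n:ℝ) ^ d := by
      rw [hswap]
      push_cast
      calc ∑ m ∈ Finset.range M, ((A m).card : ℝ)
          ≤ ∑ m ∈ Finset.range M, 2 * (n:ℝ) ^ d * (1 / 2) ^ m :=
            Finset.sum_le_sum hcard_real
        _ = 2 * (n:ℝ) ^ d * ∑ m ∈ Finset.range M, (1 / 2 : ℝ) ^ m := by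
            rw [Finset.mul_sum]
        _ ≤ 2 * (n:ℝ) ^ d * 2 := by
            have := sum_geometric_two_le M
            have hnd : (0:ℝ) ≤ 2 * (n:ℝ) ^ d := by positivity
            nlinarith
        _ = 4 * (n:ℝ) ^ d := by ring
    exact_mod_cast h1
  calc ∏ j : Fin k, (ℓ j : ℝ)
      ≤ ∏ j : Fin k, (2 : ℝ) ^ (Nat.log 2 (ℓ j) + 1) := by
        refine Finset.prod_le_prod (fun j _ => by positivity) (fun j _ => ?_)
        have := (Nat.lt_pow_succ_log_self (by norm_num : 1 < 2) (ℓ j)).le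
        exact_mod_cast this
    _ = (2 : ℝ) ^ (∑ j : Fin k, (Nat.log 2 (ℓ j) + 1)) := by
        rw [Finset.prod_pow_eq_pow_sum]
    _ ≤ (2 : ℝ) ^ (4 * n ^ d) := by
        apply pow_le_pow_right₀ (by norm_num) hTle
    _ = (16 : ℝ) ^ (n ^ d) := by rw [pow_mul]; norm_num
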